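/- Let α ≥ β with 0 < β ≤ 1, C₂ ≥ C₁ > 0, and let h : [0,∞) → ℝ be a nonnegative absolutely continuous function satisfying h'(t) + C₁·min(h(t)^α, h(t)^β) ≤ C₂ for a.e. t > 0. If h(0) > (C₂/C₁)^{1/β}, then for all t ≥ 0, h(t) ≤ (C₂/C₁)·h(0)^{1−β} + h(0)·(1 − (C₂/C₁)·h(0)^{−β})·exp(−C₁ h(0)^{β−1} t). -/

import Mathlib

open MeasureTheory

/-- Comparison / first-crossing lemma. -/
private lemma comp_lemma (h h' g g' : ℝ → ℝ) (a b : ℝ) (hab : a ≤ b)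
    (hcont : ContinuousOn h (Set.Icc a b))
    (hFTC : ∀ s t : ℝ, a ≤ s → s ≤ t → t ≤ b → h t - h s = ∫ τ in s..t, h' τ)
    (hInt : ∀ s t : ℝ, a ≤ s → s ≤ t → t ≤ b → IntervalIntegrable h' volume s t)
    (hg : ∀ τ, HasDerivAt g (g' τ) τ) (hg'c : Continuous g')
    (hgcont : Continuous g)
    (hga : h a ≤ g a)
    (key : ∀ᵐ τ ∂(volume.restrict (Set.Ioo a b)), g τ ≤ h τ → h' τ ≤ g' τ) :
    h b ≤ g b := by
  by_contra hb
  push_neg at hb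
  set S := {s ∈ Set.Icc a b | h s ≤ g s} with hS
  have haS : a ∈ S := ⟨⟨le_refl a, hab⟩, hga⟩
  have hSne : S.Nonempty := ⟨a, haS⟩
  have hSbdd : BddAbove S := ⟨b, fun x hx => hx.1.2⟩
  have hSclosed : IsClosed S := by
    have hEq : S = Set.Icc a b ∩ (fun x => h x - g x) ⁻¹' Set.Iic 0 := by
      ext x
      simp only [hS, Set.mem_setOf_eq, Set.mem_inter_iff, Set.mem_preimage, Set.mem_Iic,
        sub_nonpos]
    rw [hEq]
    exact ContinuousOn.preimage_isClosed_of_isClosed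
      (hcont.sub hgcont.continuousOn) isClosed_Icc isClosed_Iic
  have hcS : sSup S ∈ S := hSclosed.csSup_mem hSne hSbdd
  set c := sSup S with hc
  have hac : a ≤ c := hcS.1.1
  have hcb : c ≤ b := hcS.1.2
  have hbS : b ∉ S := fun hbS => absurd hbS.2 (not_le.mpr hb)
  have hcb' : c < b := lt_of_le_of_ne hcb (fun he => hbS (he ▸ hcS))
  have hpt : ∀ s ∈ Set.Ioo c b, g s ≤ h s := by
    intro s hs
    by_contra hgs
    push_neg at hgs
    have : s ∈ S := ⟨⟨hac.trans hs.1.le, hs.2.le⟩, hgs.le⟩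
    exact absurd (le_csSup hSbdd this) (not_le.mpr hs.1)
  have hkey2 : ∀ᵐ τ ∂(volume.restrict (Set.Ioo c b)), h' τ ≤ g' τ := by
    have hsub : Set.Ioo c b ⊆ Set.Ioo a b := Set.Ioo_subset_Ioo hac le_rfl
    have h1 := ae_restrict_of_ae_restrict_of_subset hsub key
    have h2 : ∀ᵐ τ ∂(volume.restrict (Set.Ioo c b)), τ ∈ Set.Ioo c b := ae_restrict_mem measurableSet_Ioo
    filter_upwards [h1, h2] with τ hτ1 hτ2
    exact hτ1 (hpt τ hτ2)
  have hint1 := hInt c b hac hcb'.le le_rfl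
  have hint2 : IntervalIntegrable g' volume c b := hg'c.intervalIntegrable c b
  have hre : volume.restrict (Set.Icc c b) = volume.restrict (Set.Ioo c b) :=
    (Measure.restrict_congr_set Ioo_ae_eq_Icc).symm
  have hmono : (∫ τ in c..b, h' τ) ≤ ∫ τ in c..b, g' τ := by
    apply intervalIntegral.integral_mono_ae_restrict hcb'.le hint1 hint2
    rw [Filter.EventuallyLE, hre]
    exact hkey2
  have hFg : (∫ τ in c..b, g' τ) = g b - g c :=
    intervalIntegral.integral_eq_sub_of_hasDerivAt (fun x _ => hg x) hint2
  have hFh := hFTC c b hac hcb'.le le_rfl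
  have hcg : h c ≤ g c := hcS.2
  linarith

/-- Lemma 5.1(2), case `0 < β ≤ 1`: exponential estimate when `h 0 > (C₂/C₁)^(1/β)`. -/
theorem stmt_2 (α β C₁ C₂ : ℝ) (hβ0 : 0 < β) (hβ1 : β ≤ 1) (hαβ : β ≤ α)
    (hC₁ : 0 < C₁) (hC : C₁ ≤ C₂)
    (h h' : ℝ → ℝ)
    (hnn : ∀ t : ℝ, 0 ≤ t → 0 ≤ h t)
    (hFTC : ∀ s t : ℝ, 0 ≤ s → s ≤ t → h t - h s = ∫ τ in s..t, h' τ)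
    (hInt : ∀ s t : ℝ, 0 ≤ s → s ≤ t → IntervalIntegrable h' volume s t)
    (hineq : ∀ᵐ t ∂(volume.restrict (Set.Ioi (0:ℝ))),
      h' t + C₁ * min (h t ^ α) (h t ^ β) ≤ C₂)
    (h0 : (C₂ / C₁) ^ (1 / β) < h 0) :
    ∀ t : ℝ, 0 ≤ t →
      h t ≤ (C₂ / C₁) * h 0 ^ (1 - β) +
        h 0 * (1 - (C₂ / C₁) * h 0 ^ (-β)) * Real.exp (-C₁ * h 0 ^ (β - 1) * t) := by
  set K := C₂ / C₁ with hK
  set M := h 0 with hM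
  set cc := K ^ (1 / β) with hcc
  have hK1 : (1:ℝ) ≤ K := (one_le_div hC₁).mpr hC
  have hK0 : (0:ℝ) < K := lt_of_lt_of_le one_pos hK1
  have hcc1 : (1:ℝ) ≤ cc := by
    calc (1:ℝ) = 1 ^ (1/β) := (Real.one_rpow _).symm
    _ ≤ K ^ (1/β) := Real.rpow_le_rpow zero_le_one hK1 (by positivity)
  have hMcc : cc < M := h0
  have hM1 : (1:ℝ) < M := lt_of_le_of_lt hcc1 hMcc
  have hMpos : (0:ℝ) < M := lt_trans one_pos hM1
  have hccβ : cc ^ β = K := by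
    rw [hcc, ← Real.rpow_mul hK0.le, one_div_mul_cancel hβ0.ne', Real.rpow_one]
  have hMβ : K < M ^ β := by
    calc K = cc ^ β := hccβ.symm
    _ < M ^ β := Real.rpow_lt_rpow (by positivity) hMcc hβ0
  have hC₁K : C₁ * K = C₂ := by rw [hK]; field_simp
  -- useful rpow identities
  have hMM1 : M ^ (β - 1) * M ^ (1 - β) = 1 := by
    rw [← Real.rpow_add hMpos]; norm_num
  have hMM2 : M * M ^ (-β) = M ^ (1 - β) := by
    nth_rewrite 1 [← Real.rpow_one M]
    rw [← Real.rpow_add hMpos]; ring_nf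
  -- continuity of h on every Icc 0 T
  have hcont : ∀ T : ℝ, ContinuousOn h (Set.Icc 0 T) := by
    intro T
    rcases le_or_gt 0 T with hT | hT
    · have hii : IntervalIntegrable h' volume 0 T := hInt 0 T le_rfl hT
      have hprim := intervalIntegral.continuousOn_primitive_interval' hii
        (Set.left_mem_uIcc)
      have huIcc : Set.uIcc (0:ℝ) T = Set.Icc 0 T := Set.uIcc_of_le hT
      rw [huIcc] at hprim
      have : ContinuousOn (fun x => h 0 + ∫ τ in (0:ℝ)..x, h' τ) (Set.Icc 0 T) :=
        continuousOn_const.add hprim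
      apply this.congr
      intro x hx
      have := hFTC 0 x le_rfl hx.1
      simp only [← hM]
      linarith
    · rw [Set.Icc_eq_empty (by linarith)]
      exact continuousOn_empty _
  -- the a.e. inequality restricted to subintervals
  have hineq' : ∀ a b : ℝ, 0 ≤ a →
      ∀ᵐ τ ∂(volume.restrict (Set.Ioo a b)),
        h' τ + C₁ * min (h τ ^ α) (h τ ^ β) ≤ C₂ := by
    intro a b ha
    exact ae_restrict_of_ae_restrict_of_subset
      (fun x hx => lt_of_le_of_lt ha hx.1) hineq
  -- min equals h^β when 1 ≤ h τ
  have hmin : ∀ τ : ℝ, 1 ≤ h τ → min (h τ ^ α) (h τ ^ β) = h τ ^ β := by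
    intro τ hτ
    exact min_eq_right (Real.rpow_le_rpow_of_exponent_le hτ hαβ)
  -- Step 1 : h t ≤ M for all t ≥ 0
  have step1 : ∀ t : ℝ, 0 ≤ t → h t ≤ M := by
    intro t ht
    have := comp_lemma h h' (fun _ => M) (fun _ => 0) 0 t ht (hcont t)
      (fun s u hs hsu _ => hFTC s u hs hsu)
      (fun s u hs hsu _ => hInt s u hs hsu)
      (fun τ => hasDerivAt_const τ M) continuous_const continuous_const le_rfl ?_
    · exact this
    · filter_upwards [hineq' 0 t le_rfl, ae_restrict_mem measurableSet_Ioo] with τ hτ hτm hMh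
      have h1 : (1:ℝ) ≤ h τ := le_trans hM1.le hMh
      rw [hmin τ h1] at hτ
      have : K ≤ h τ ^ β := le_trans hMβ.le
        (Real.rpow_le_rpow hMpos.le hMh hβ0.le)
      nlinarith
  -- Step 2 : once below cc, stays below cc
  have step2 : ∀ s t : ℝ, 0 ≤ s → s ≤ t → h s ≤ cc → h t ≤ cc := by
    intro s t hs hst hhs
    have := comp_lemma h h' (fun _ => cc) (fun _ => 0) s t hst
      ((hcont t).mono (Set.Icc_subset_Icc_left hs))
      (fun u v hu huv _ => hFTC u v (hs.trans hu) huv)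
      (fun u v hu huv _ => hInt u v (hs.trans hu) huv)
      (fun τ => hasDerivAt_const τ cc) continuous_const continuous_const hhs ?_
    · exact this
    · filter_upwards [hineq' s t hs, ae_restrict_mem measurableSet_Ioo] with τ hτ hτm hch
      have h1 : (1:ℝ) ≤ h τ := le_trans hcc1 hch
      rw [hmin τ h1] at hτ
      have : K ≤ h τ ^ β := by
        calc K = cc ^ β := hccβ.symm
        _ ≤ h τ ^ β := Real.rpow_le_rpow (by positivity) hch hβ0.le
      nlinarith
  -- constants for the exponential barrier
  set A := K * M ^ (1 - β) with hA
  set B := M - A with hB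
  set lam := C₁ * M ^ (β - 1) with hlam
  have hlampos : 0 < lam := by
    apply mul_pos hC₁ (Real.rpow_pos_of_pos hMpos _)
  have hBpos : 0 ≤ B := by
    rw [hB, hA, sub_nonneg]
    have : K * M ^ (1 - β) ≤ M ^ β * M ^ (1 - β) :=
      mul_le_mul_of_nonneg_right hMβ.le (Real.rpow_nonneg hMpos.le _)
    calc K * M ^ (1-β) ≤ M ^ β * M ^ (1-β) := this
    _ = M := by rw [← Real.rpow_add hMpos]; norm_num
  have hccA : cc ≤ A := by
    have h1 : (1:ℝ)/β = 1 + (1/β) * (1 - β) := by field_simp; ring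
    have h2 : cc = K * cc ^ (1 - β) := by
      rw [hcc, ← Real.rpow_mul hK0.le]
      nth_rewrite 2 [← Real.rpow_one K]
      rw [← Real.rpow_add hK0, ← h1]
    rw [h2, hA]
    exact mul_le_mul_of_nonneg_left
      (Real.rpow_le_rpow (by positivity) hMcc.le (by linarith)) hK0.le
  set G := fun τ : ℝ => A + B * Real.exp (-lam * τ) with hG
  set G' := fun τ : ℝ => B * (Real.exp (-lam * τ) * -lam) with hG'
  have hGderiv : ∀ τ, HasDerivAt G (G' τ) τ := by
    intro τ
    have h1 : HasDerivAt (fun x : ℝ => -lam * x) (-lam) τ := by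
      simpa using (hasDerivAt_id τ).const_mul (-lam)
    have h2 := (Real.hasDerivAt_exp (-lam * τ)).comp τ h1
    exact ((h2.const_mul B).const_add A)
  have hG'cont : Continuous G' := by
    apply Continuous.mul continuous_const
    exact ((Real.continuous_exp.comp (continuous_const.mul continuous_id)).mul continuous_const)
  have hGcont : Continuous G := by
    apply Continuous.add continuous_const
    exact continuous_const.mul (Real.continuous_exp.comp (continuous_const.mul continuous_id))
  have hG0 : G 0 = M := by simp [hG, hB]
  -- main statement
  intro t ht
  have hgoal : h t ≤ G t → h t ≤ K * M ^ (1 - β) +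
      M * (1 - K * M ^ (-β)) * Real.exp (-C₁ * M ^ (β - 1) * t) := by
    intro hGt
    have hrw : M * (1 - K * M ^ (-β)) = B := by
      rw [hB, hA]; rw [mul_sub, mul_one, mul_comm K (M ^ (-β)), ← mul_assoc, hMM2]
      ring
    have hexp : -C₁ * M ^ (β - 1) * t = -lam * t := by rw [hlam]; ring
    rw [hrw, hexp]
    exact hGt
  apply hgoal
  by_cases hcase : ∃ s ∈ Set.Icc 0 t, h s ≤ cc
  · obtain ⟨s, hs, hhs⟩ := hcase
    have h1 : h t ≤ cc := step2 s t hs.1 hs.2 hhs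
    have h2 : 0 < Real.exp (-lam * t) := Real.exp_pos _
    have : cc ≤ G t := by
      rw [hG]
      have : 0 ≤ B * Real.exp (-lam * t) := mul_nonneg hBpos h2.le
      simp only [← hA]
      linarith [hccA]
    linarith
  · push_neg at hcase
    apply comp_lemma h h' G G' 0 t ht (hcont t)
      (fun s u hs hsu _ => hFTC s u hs hsu)
      (fun s u hs hsu _ => hInt s u hs hsu)
      hGderiv hG'cont hGcont (le_of_eq hG0.symm) ?_
    filter_upwards [hineq' 0 t le_rfl, ae_restrict_mem measurableSet_Ioo] with τ hτ hτm hGh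
    -- here cc < h τ ≤ M
    have hτIcc : τ ∈ Set.Icc 0 t := ⟨hτm.1.le, hτm.2.le⟩
    have hcch : cc < h τ := hcase τ hτIcc
    have hhM : h τ ≤ M := step1 τ hτm.1.le
    have h1 : (1:ℝ) ≤ h τ := le_trans hcc1 hcch.le
    have hhpos : (0:ℝ) < h τ := lt_of_lt_of_le one_pos h1
    rw [hmin τ h1] at hτ
    -- h τ ^ β ≥ M^(β-1) * h τ
    have hpow : M ^ (β - 1) * h τ ≤ h τ ^ β := by
      have e1 : h τ ^ β = h τ ^ (β - 1) * h τ := by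
        nth_rewrite 3 [← Real.rpow_one (h τ)]
        rw [← Real.rpow_add hhpos]; ring_nf
      rw [e1]
      apply mul_le_mul_of_nonneg_right _ hhpos.le
      exact Real.rpow_le_rpow_of_nonpos hhpos hhM (by linarith)
    -- lam * G τ ≥ lam * A + ... and lam * A = C₂
    have hlamA : lam * A = C₂ := by
      rw [hlam, hA]
      calc C₁ * M ^ (β-1) * (K * M ^ (1-β)) = C₁ * K * (M ^ (β-1) * M ^ (1-β)) := by ring
      _ = C₂ := by rw [hMM1, hC₁K, mul_one]
    have hGτ : G τ = A + B * Real.exp (-lam * τ) := rfl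
    have hG'τ : G' τ = B * (Real.exp (-lam * τ) * -lam) := rfl
    have hlamh : lam * G τ ≤ lam * h τ := mul_le_mul_of_nonneg_left hGh hlampos.le
    have hfinal : lam * h τ ≤ C₁ * h τ ^ β := by
      rw [hlam]
      calc C₁ * M ^ (β-1) * h τ = C₁ * (M ^ (β-1) * h τ) := by ring
      _ ≤ C₁ * h τ ^ β := mul_le_mul_of_nonneg_left hpow hC₁.le
    rw [hG'τ]
    rw [hGτ] at hlamh
    nlinarith [hlamh, hfinal, hτ, hlamA]
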